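/- arXiv:2502.12033 — 2 statements merged into one kernel-verified Lean document; each statement's English description precedes it below -/
import Mathlib

section
/- For matrices A, B ∈ R^{m×n}, if the column spaces of A and B intersect trivially and the row spaces of A and B intersect trivially, then rank(A + B) = rank(A) + rank(B). -/
open Matrix

noncomputable def eqvE (n : ℕ) : (Fin n → ℝ) ≃ₗ[ℝ] EuclideanSpace ℝ (Fin n) :=
  (WithLp.linearEquiv 2 ℝ (Fin n → ℝ)).symm

lemma key_inner {m n : ℕ} (M : Matrix (Fin m) (Fin n) ℝ)
    (x : EuclideanSpace ℝ (Fin n)) (u : Fin m → ℝ) :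
    (inner ℝ ((eqvE n) (Mᵀ *ᵥ u)) x : ℝ) = u ⬝ᵥ (M *ᵥ ((eqvE n).symm x)) := by
  rw [Matrix.dotProduct_mulVec, mulVec_transpose]
  simp [eqvE, PiLp.inner_apply, RCLike.inner_apply, dotProduct, mul_comm]

lemma orth_key {m n : ℕ} (M : Matrix (Fin m) (Fin n) ℝ) :
    ((LinearMap.range Mᵀ.mulVecLin).map (eqvE n).toLinearMap)ᗮ
      = (LinearMap.ker M.mulVecLin).map (eqvE n).toLinearMap := by
  ext x
  simp only [Submodule.mem_orthogonal, Submodule.mem_map, LinearMap.mem_range,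
    LinearMap.mem_ker, mulVecLin_apply]
  constructor
  · intro h
    refine ⟨(eqvE n).symm x, ?_, by simp⟩
    refine dotProduct_eq_zero _ fun u => ?_
    rw [dotProduct_comm, ← key_inner]
    exact h _ ⟨_, ⟨u, rfl⟩, rfl⟩
  · rintro ⟨w, hw, rfl⟩ y hy
    obtain ⟨u, ⟨t, rfl⟩, rfl⟩ := hy
    rw [LinearEquiv.coe_coe, key_inner]
    simp [hw]

lemma finrank_map_eqvE {n : ℕ} (p : Submodule ℝ (Fin n → ℝ)) :
    Module.finrank ℝ (p.map (eqvE n).toLinearMap) = Module.finrank ℝ p :=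
  LinearEquiv.finrank_map_eq (eqvE n) p

/-- If the column spaces and the row spaces of A and B intersect trivially,
then rank(A + B) = rank(A) + rank(B). -/
theorem rank_add_eq_of_trivial_inter (m n : ℕ) (A B : Matrix (Fin m) (Fin n) ℝ)
    (hcol : LinearMap.range A.mulVecLin ⊓ LinearMap.range B.mulVecLin = ⊥)
    (hrow : LinearMap.range Aᵀ.mulVecLin ⊓ LinearMap.range Bᵀ.mulVecLin = ⊥) :
    (A + B).rank = A.rank + B.rank := by
  classical
  have hker : LinearMap.ker (A + B).mulVecLin
      = LinearMap.ker A.mulVecLin ⊓ LinearMap.ker B.mulVecLin := by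
    ext x
    simp only [LinearMap.mem_ker, Submodule.mem_inf, mulVecLin_apply, add_mulVec]
    constructor
    · intro h
      have hmem : A *ᵥ x ∈ LinearMap.range A.mulVecLin ⊓ LinearMap.range B.mulVecLin := by
        refine ⟨⟨x, rfl⟩, ⟨-x, ?_⟩⟩
        simp only [mulVecLin_apply, mulVec_neg]
        exact (eq_neg_of_add_eq_zero_left h).symm
      rw [hcol] at hmem
      have hA : A *ᵥ x = 0 := hmem
      refine ⟨hA, ?_⟩
      rw [hA, zero_add] at h
      exact h
    · rintro ⟨h1, h2⟩
      rw [h1, h2, add_zero]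
  set e := eqvE n
  set WA := (LinearMap.range Aᵀ.mulVecLin).map e.toLinearMap with hWA
  set WB := (LinearMap.range Bᵀ.mulVecLin).map e.toLinearMap with hWB
  have hWinf : WA ⊓ WB = ⊥ := by
    rw [hWA, hWB, ← Submodule.map_inf _ e.injective, hrow, Submodule.map_bot]
  have hrA : Module.finrank ℝ WA = A.rank := by
    rw [hWA, finrank_map_eqvE, ← Matrix.rank_transpose]
    rfl
  have hrB : Module.finrank ℝ WB = B.rank := by
    rw [hWB, finrank_map_eqvE, ← Matrix.rank_transpose]
    rfl
  have hsup : Module.finrank ℝ ↥(WA ⊔ WB) = A.rank + B.rank := by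
    have := Submodule.finrank_sup_add_finrank_inf_eq WA WB
    rw [hWinf, finrank_bot, add_zero, hrA, hrB] at this
    exact this
  have horth : (WA ⊔ WB)ᗮ
      = (LinearMap.ker A.mulVecLin ⊓ LinearMap.ker B.mulVecLin).map e.toLinearMap := by
    rw [← Submodule.inf_orthogonal, hWA, hWB, orth_key, orth_key,
      ← Submodule.map_inf _ e.injective]
  have h2 : Module.finrank ℝ ↥(WA ⊔ WB) + Module.finrank ℝ ↥((WA ⊔ WB)ᗮ) = n := by
    rw [Submodule.finrank_add_finrank_orthogonal]
    simp [finrank_euclideanSpace_fin]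
  have h3 : (A + B).rank
      + Module.finrank ℝ ↥(LinearMap.ker (A + B).mulVecLin) = n := by
    have := LinearMap.finrank_range_add_finrank_ker (A + B).mulVecLin
    simpa [Matrix.rank] using this
  have h4 : Module.finrank ℝ ↥(LinearMap.ker (A + B).mulVecLin)
      = Module.finrank ℝ ↥((WA ⊔ WB)ᗮ) := by
    rw [hker, horth, finrank_map_eqvE]
  omega
end

section
/- Layer normalization preserves matrix rank: for A ∈ R^{m×n} with every row having nonzero standard deviation, rank(D⁻¹(A − 1·E(A)ᵀ)) ∈ {rank(A) − 1, rank(A)}, where E(A) is the vector of row means and D is the diagonal matrix of row standard deviations; in particular the rank changes by at most 1 and rank(D⁻¹(A − 1·E(A)ᵀ)) = rank(A − 1·E(A)ᵀ). -/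
lemma myrank_add_le {m n : ℕ} (A B : Matrix (Fin m) (Fin n) ℝ) :
    (A + B).rank ≤ A.rank + B.rank := by
  rw [Matrix.rank, Matrix.rank, Matrix.rank, Matrix.mulVecLin_add]
  refine le_trans (Submodule.finrank_mono ?_) (Submodule.finrank_add_le_finrank_add_finrank _ _)
  rintro x ⟨y, rfl⟩
  exact Submodule.add_mem_sup ⟨y, rfl⟩ ⟨y, rfl⟩

lemma myrank_vecMulVec_le {m n : ℕ} (w : Fin m → ℝ) (v : Fin n → ℝ) :
    (Matrix.vecMulVec w v).rank ≤ 1 := by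
  rw [Matrix.vecMulVec_eq (Fin 1)]
  exact le_trans (Matrix.rank_mul_le_left _ _)
    (le_trans (Matrix.rank_le_card_width _) (by simp))

/-- Layer normalization essentially preserves the rank: it changes the rank by at
most one (the rank of the normalized matrix is rank(A) − 1 or rank(A)), and the
diagonal rescaling by the row standard deviations does not change the rank of the
mean-centered matrix. -/
theorem layerNorm_rank (m n : ℕ) (hn : 0 < n) (A : Matrix (Fin m) (Fin n) ℝ)
    (σ : Fin m → ℝ)
    (hσdef : ∀ i, σ i = Real.sqrt ((∑ j, (A i j - (∑ l, A i l) / n) ^ 2) / n))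
    (hσ : ∀ i, σ i ≠ 0) :
    (((Matrix.diagonal fun i => (σ i)⁻¹) *
        (A - Matrix.vecMulVec (fun i => (∑ j, A i j) / n) (fun _ => (1 : ℝ)))).rank
        = A.rank - 1 ∨
      ((Matrix.diagonal fun i => (σ i)⁻¹) *
        (A - Matrix.vecMulVec (fun i => (∑ j, A i j) / n) (fun _ => (1 : ℝ)))).rank
        = A.rank) ∧
    ((Matrix.diagonal fun i => (σ i)⁻¹) *
        (A - Matrix.vecMulVec (fun i => (∑ j, A i j) / n) (fun _ => (1 : ℝ)))).rank
      = (A - Matrix.vecMulVec (fun i => (∑ j, A i j) / n) (fun _ => (1 : ℝ))).rank := by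
  set B := A - Matrix.vecMulVec (fun i => (∑ j, A i j) / n) (fun _ => (1 : ℝ)) with hB
  have hdet : IsUnit (Matrix.diagonal fun i => (σ i)⁻¹).det := by
    rw [Matrix.det_diagonal]
    exact isUnit_iff_ne_zero.mpr (Finset.prod_ne_zero_iff.mpr fun i _ => inv_ne_zero (hσ i))
  have hDB : ((Matrix.diagonal fun i => (σ i)⁻¹) * B).rank = B.rank :=
    Matrix.rank_mul_eq_right_of_isUnit_det _ _ hdet
  refine ⟨?_, hDB⟩
  -- B = A * M
  have hfact : B = A * ((1 : Matrix (Fin n) (Fin n) ℝ) - Matrix.of fun _ _ => (n : ℝ)⁻¹) := by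
    ext i j
    simp [hB, Matrix.mul_apply, Matrix.vecMulVec_apply, Matrix.one_apply, mul_sub,
      Finset.sum_sub_distrib, Finset.sum_ite_eq', div_eq_mul_inv, Finset.sum_mul]
  have h1 : B.rank ≤ A.rank := by
    rw [hfact]; exact Matrix.rank_mul_le_left _ _
  have h2 : A.rank ≤ B.rank + 1 := by
    have : A = B + Matrix.vecMulVec (fun i => (∑ j, A i j) / n) (fun _ => (1 : ℝ)) := by
      rw [hB, sub_add_cancel]
    calc A.rank = (B + Matrix.vecMulVec (fun i => (∑ j, A i j) / n) (fun _ => (1 : ℝ))).rank := by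
          rw [← this]
      _ ≤ B.rank + (Matrix.vecMulVec (fun i => (∑ j, A i j) / n) (fun _ => (1 : ℝ))).rank :=
          myrank_add_le _ _
      _ ≤ B.rank + 1 := by gcongr; exact myrank_vecMulVec_le _ _
  rw [hDB]
  omega
end
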